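/- Suppose the Verblunsky coefficients satisfy |α_n| ≤ C q^n for all n ≥ 0, where C > 0 and q ∈ (0,1). Then for every q' ∈ (q,1) there is a constant C_{q'} > 0 such that for all n ≥ 0 and all z with |z| ≤ 1, |Φ_n(z)| ≤ C_{q'} (max(|z|, q'))^n. -/

import Mathlib

open Polynomial Filter Topology

/-- The monic orthogonal polynomials on the unit circle, defined by the Szegő
recursion `Φ₀ = 1`, `Φ_{n+1}(z) = z Φ_n(z) - conj(α_n) Φ_n^*(z)`, where the reversed
polynomial is `P^*(z) = Σ_{j=0}^n conj(c_{n-j}) z^j`. -/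
noncomputable def PhiP (α : ℕ → ℂ) : ℕ → Polynomial ℂ
  | 0 => 1
  | n + 1 => X * PhiP α n -
      Polynomial.C ((starRingEnd ℂ) (α n)) *
        Polynomial.reflect n (Polynomial.map (starRingEnd ℂ) (PhiP α n))

/-- The reversed polynomial `Φ_n^*(z) = z^n conj(Φ_n(1/conj z))`. -/
noncomputable def PhiStarP (α : ℕ → ℂ) (n : ℕ) : Polynomial ℂ :=
  Polynomial.reflect n (Polynomial.map (starRingEnd ℂ) (PhiP α n))

lemma natDegree_reflect_le {p : ℂ[X]} {n : ℕ} (hp : p.natDegree ≤ n) :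
    (reflect n p).natDegree ≤ n := by
  apply natDegree_le_iff_coeff_eq_zero.2
  intro m hm
  rw [coeff_reflect, revAt_eq_self_of_lt hm]
  exact coeff_eq_zero_of_natDegree_lt (lt_of_le_of_lt hp hm)

lemma phiP_natDegree_le (α : ℕ → ℂ) : ∀ n, (PhiP α n).natDegree ≤ n
  | 0 => by simp [PhiP]
  | n+1 => by
    rw [PhiP]
    refine (natDegree_sub_le _ _).trans (max_le ?_ ?_)
    · refine (natDegree_mul_le (p := (X:ℂ[X]))).trans ?_
      have h1 := phiP_natDegree_le α n
      have h2 := natDegree_X_le (R := ℂ)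
      omega
    · refine (natDegree_mul_le (p := (C ((starRingEnd ℂ) (α n))))).trans ?_
      have h := natDegree_reflect_le ((natDegree_map_le (f := starRingEnd ℂ) (p := PhiP α n)).trans (phiP_natDegree_le α n))
      simp only [natDegree_C, zero_add]
      omega

lemma reflect_reflect (N : ℕ) (p : ℂ[X]) : reflect N (reflect N p) = p := by
  ext i
  simp [coeff_reflect, revAt_invol]

lemma reflect_succ_reflect {p : ℂ[X]} {n : ℕ} (hp : p.natDegree ≤ n) :
    reflect (n+1) (reflect n p) = X * p := by
  have h1 : reflect (n+1) (X * p) = reflect n p := by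
    have h := reflect_mul (X : ℂ[X]) p natDegree_X_le hp
    have hX : reflect 1 (X : ℂ[X]) = 1 := by
      rw [← pow_one (X : ℂ[X]), reflect_monomial]
      simp [revAt_le]
    rw [hX, one_mul] at h
    rw [show n + 1 = 1 + n by ring, h]
  rw [← h1, reflect_reflect]

lemma phiStar_succ (α : ℕ → ℂ) (n : ℕ) :
    PhiStarP α (n+1) = PhiStarP α n - C (α n) * (X * PhiP α n) := by
  unfold PhiStarP
  rw [show PhiP α (n+1) = X * PhiP α n -
      Polynomial.C ((starRingEnd ℂ) (α n)) *
        Polynomial.reflect n (Polynomial.map (starRingEnd ℂ) (PhiP α n)) from rfl]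
  rw [Polynomial.map_sub, reflect_sub, Polynomial.map_mul, Polynomial.map_mul, map_X, map_C]
  congr 1
  · have h := reflect_mul (X : ℂ[X]) (Polynomial.map (starRingEnd ℂ) (PhiP α n))
      natDegree_X_le ((natDegree_map_le (f := starRingEnd ℂ) (p := PhiP α n)).trans (phiP_natDegree_le α n))
    have hX : reflect 1 (X : ℂ[X]) = 1 := by
      rw [← pow_one (X : ℂ[X]), reflect_monomial]
      simp [revAt_le]
    rw [hX, one_mul] at h
    rw [show n + 1 = 1 + n by ring, h]
  · have hmm : Polynomial.map (starRingEnd ℂ)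
        (Polynomial.map (starRingEnd ℂ) (PhiP α n)) = PhiP α n := by
      rw [Polynomial.map_map]
      have : (starRingEnd ℂ).comp (starRingEnd ℂ) = RingHom.id ℂ :=
        RingHom.ext fun x => Complex.conj_conj x
      rw [this, Polynomial.map_id]
    rw [← reflect_map, hmm, Complex.conj_conj, reflect_C_mul,
      reflect_succ_reflect (phiP_natDegree_le α n)]
theorem stmt_2 (α : ℕ → ℂ) (hα : ∀ n, ‖α n‖ < 1)
    (C q : ℝ) (hC : 0 < C) (hq0 : 0 < q) (hq1 : q < 1)
    (hdecay : ∀ n : ℕ, ‖α n‖ ≤ C * q ^ n) :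
    ∀ q' : ℝ, q < q' → q' < 1 →
      ∃ Cq' : ℝ, 0 < Cq' ∧ ∀ n : ℕ, ∀ z : ℂ, ‖z‖ ≤ 1 →
        ‖(PhiP α n).eval z‖ ≤ Cq' * max (‖z‖) q' ^ n := by
  intro q' hqq' hq'1
  have hq'0 : 0 < q' := hq0.trans hqq'
  set x : ℝ := q / q' with hx
  have hx0 : 0 < x := div_pos hq0 hq'0
  have hx1 : x < 1 := (div_lt_one hq'0).2 hqq'
  set a : ℕ → ℝ := fun k => (C / q') * x ^ k with ha
  have ha0 : ∀ k, 0 ≤ a k := fun k =>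
    mul_nonneg (div_pos hC hq'0).le (pow_nonneg hx0.le k)
  set K : ℕ → ℝ := fun n => ∏ k ∈ Finset.range n, (1 + a k) with hK
  have hK0 : ∀ n, 0 < K n := fun n =>
    Finset.prod_pos fun k _ => by linarith [ha0 k]
  have hKsucc : ∀ n, K (n + 1) = K n * (1 + a n) := fun n => by
    simp [hK, Finset.prod_range_succ]
  -- K n is bounded
  set B : ℝ := Real.exp ((C / q') / (1 - x)) with hB
  have hKB : ∀ n, K n ≤ B := by
    intro n
    have h1 : K n ≤ Real.exp (∑ k ∈ Finset.range n, a k) := by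
      rw [Real.exp_sum]
      refine Finset.prod_le_prod (fun k _ => by linarith [ha0 k]) (fun k _ => ?_)
      have := Real.add_one_le_exp (a k)
      linarith
    have h2 : (∑ k ∈ Finset.range n, a k) ≤ (C / q') / (1 - x) := by
      rw [← Finset.mul_sum]
      have hgs : (∑ k ∈ Finset.range n, x ^ k) ≤ 1 / (1 - x) := by
        have heq : (x ^ n - 1) / (x - 1) = (1 - x ^ n) / (1 - x) := by
          rw [← neg_div_neg_eq]; ring_nf
        rw [geom_sum_eq hx1.ne n, heq]
        have hxn : 0 ≤ x ^ n := pow_nonneg hx0.le n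
        have h1x : 0 < 1 - x := by linarith
        gcongr
        linarith
      calc C / q' * ∑ k ∈ Finset.range n, x ^ k
          ≤ C / q' * (1 / (1 - x)) :=
            mul_le_mul_of_nonneg_left hgs (div_pos hC hq'0).le
        _ = C / q' / (1 - x) := by ring
    exact h1.trans (Real.exp_le_exp.2 h2)
  refine ⟨B, Real.exp_pos _, ?_⟩
  -- main induction
  have key : ∀ n : ℕ, ∀ z : ℂ, ‖z‖ ≤ 1 →
      ‖(PhiP α n).eval z‖ ≤ K n * (max (‖z‖) q') ^ n ∧
      ‖(PhiStarP α n).eval z‖ ≤ K n := by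
    intro n
    induction n with
    | zero => intro z hz; simp [PhiP, PhiStarP, hK]
    | succ n ih =>
      intro z hz
      obtain ⟨h1, h2⟩ := ih z hz
      set r : ℝ := max (‖z‖) q' with hr
      have hrq' : q' ≤ r := le_max_right _ _
      have hr0 : 0 < r := hq'0.trans_le hrq'
      have hr1 : r ≤ 1 := max_le hz hq'1.le
      have hzr : ‖z‖ ≤ r := le_max_left _ _
      have hrn : 0 < r ^ n := pow_pos hr0 n
      have hq'r : q' ^ (n + 1) ≤ r ^ (n + 1) := pow_le_pow_left₀ hq'0.le hrq' _
      have han : C * q ^ n ≤ a n * r ^ (n + 1) := by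
        have : a n * q' ^ (n + 1) = C * q ^ n := by
          simp only [ha, hx, div_pow]
          field_simp
          ring
        calc C * q ^ n = a n * q' ^ (n + 1) := this.symm
          _ ≤ a n * r ^ (n + 1) := mul_le_mul_of_nonneg_left hq'r (ha0 n)
      have han' : C * q ^ n * r ^ (n + 1) ≤ a n := by
        have h3 : r ^ (n + 1) ≤ 1 := pow_le_one₀ hr0.le hr1
        have h4 : C * q ^ n ≤ a n := by
          have h5 : q ^ n ≤ x ^ n := by
            apply pow_le_pow_left₀ hq0.le
            rw [le_div_iff₀ hq'0]
            nlinarith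
          have : C * q ^ n ≤ C * x ^ n := mul_le_mul_of_nonneg_left h5 hC.le
          calc C * q ^ n ≤ C * x ^ n := this
            _ ≤ (C / q') * x ^ n := by
              apply mul_le_mul_of_nonneg_right _ (pow_nonneg hx0.le n)
              rw [le_div_iff₀ hq'0]
              nlinarith
            _ = a n := rfl
        nlinarith [mul_pos hC (pow_pos hq0 n)]
      have habs := hdecay n
      have habs0 : (0:ℝ) ≤ ‖α n‖ := norm_nonneg _
      have hphi0 : (0:ℝ) ≤ ‖(PhiP α n).eval z‖ := norm_nonneg _
      have hphis0 : (0:ℝ) ≤ ‖(PhiStarP α n).eval z‖ := norm_nonneg _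
      have e1 : (PhiP α (n+1)).eval z =
          z * (PhiP α n).eval z - (starRingEnd ℂ) (α n) * (PhiStarP α n).eval z := by
        rw [show PhiP α (n+1) = X * PhiP α n -
            Polynomial.C ((starRingEnd ℂ) (α n)) * PhiStarP α n from rfl]
        simp
      have e2 : (PhiStarP α (n+1)).eval z =
          (PhiStarP α n).eval z - (α n) * (z * (PhiP α n).eval z) := by
        rw [phiStar_succ]
        simp
      constructor
      · rw [e1]
        calc ‖z * (PhiP α n).eval z - (starRingEnd ℂ) (α n) * (PhiStarP α n).eval z‖
            ≤ ‖z * (PhiP α n).eval z‖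
              + ‖(starRingEnd ℂ) (α n) * (PhiStarP α n).eval z‖ := by
              exact norm_sub_le _ _
          _ = ‖z‖ * ‖(PhiP α n).eval z‖
              + ‖α n‖ * ‖(PhiStarP α n).eval z‖ := by
              simp [map_mul]
          _ ≤ r * (K n * r ^ n) + (C * q ^ n) * K n := by
              gcongr
          _ ≤ K n * r ^ (n + 1) + (a n * r ^ (n + 1)) * K n := by
              have : r * (K n * r ^ n) = K n * r ^ (n + 1) := by ring
              rw [this]
              gcongr
          _ = K (n + 1) * r ^ (n + 1) := by rw [hKsucc]; ring
      · rw [e2]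
        calc ‖(PhiStarP α n).eval z - (α n) * (z * (PhiP α n).eval z)‖
            ≤ ‖(PhiStarP α n).eval z‖
              + ‖(α n) * (z * (PhiP α n).eval z)‖ :=
              norm_sub_le _ _
          _ = ‖(PhiStarP α n).eval z‖
              + ‖α n‖ * (‖z‖ * ‖(PhiP α n).eval z‖) := by
              simp [map_mul]
          _ ≤ K n + (C * q ^ n) * (r * (K n * r ^ n)) := by gcongr
          _ = K n + (C * q ^ n * r ^ (n + 1)) * K n := by ring
          _ ≤ K n + a n * K n := by gcongr
          _ = K (n + 1) := by rw [hKsucc]; ring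
  intro n z hz
  have := (key n z hz).1
  calc ‖(PhiP α n).eval z‖ ≤ K n * (max (‖z‖) q') ^ n := this
    _ ≤ B * (max (‖z‖) q') ^ n := by
        apply mul_le_mul_of_nonneg_right (hKB n)
        exact pow_nonneg (le_trans hq'0.le (le_max_right _ _)) n
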